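/- arXiv:0711.3056 — 2 statements merged into one kernel-verified Lean document; each statement's English description precedes it below -/
import Mathlib

section
/- Let H₁, H₂ be Hilbert subspaces of E with reproducing operators H₁, H₂, and let H₁ + H₂ be their sum (the image of the Hilbert space product H₁ × H₂ under Φ(ξ₁,ξ₂) = J₁ξ₁ + J₂ξ₂, with the quotient Hilbert norm ‖ξ‖² = inf{‖ξ₁‖₁² + ‖ξ₂‖₂² : ξ = ξ₁ + ξ₂}). Then the reproducing operator of H₁ + H₂ equals H₁ + H₂. -/
/-- The reproducing operator of the sum `H₁ + H₂` of two Hilbert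
subspaces (the image of `H₁ × H₂` under `(ξ₁,ξ₂) ↦ J₁ξ₁ + J₂ξ₂` with the quotient
norm `‖ξ‖² = inf {‖ξ₁‖² + ‖ξ₂‖²}`) is the sum `H₁ + H₂` of the reproducing
operators. -/
theorem reproducing_operator_of_sum
    {E : Type*} [AddCommGroup E] [Module ℂ E] [TopologicalSpace E]
    {Estar : Type*} (B : Estar → E → ℂ)
    (hsep : ∀ φ : E, (∀ x : Estar, B x φ = 0) → φ = 0)
    {H₁ : Type*} [NormedAddCommGroup H₁] [InnerProductSpace ℂ H₁] [CompleteSpace H₁]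
    {H₂ : Type*} [NormedAddCommGroup H₂] [InnerProductSpace ℂ H₂] [CompleteSpace H₂]
    {K : Type*} [NormedAddCommGroup K] [InnerProductSpace ℂ K] [CompleteSpace K]
    (J₁ : H₁ →L[ℂ] E) (hJ₁ : Function.Injective J₁)
    (J₂ : H₂ →L[ℂ] E) (hJ₂ : Function.Injective J₂)
    (JK : K →L[ℂ] E) (hJK : Function.Injective JK)
    (Jstar₁ : Estar → H₁) (Jstar₂ : Estar → H₂) (JstarK : Estar → K)
    (hJstar₁ : ∀ (x : Estar) (ξ : H₁), (inner ℂ (Jstar₁ x) ξ : ℂ) = B x (J₁ ξ))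
    (hJstar₂ : ∀ (x : Estar) (ξ : H₂), (inner ℂ (Jstar₂ x) ξ : ℂ) = B x (J₂ ξ))
    (hJstarK : ∀ (x : Estar) (ξ : K), (inner ℂ (JstarK x) ξ : ℂ) = B x (JK ξ))
    (hrange : Set.range JK = {φ : E | ∃ (ξ₁ : H₁) (ξ₂ : H₂), φ = J₁ ξ₁ + J₂ ξ₂})
    (hnorm : ∀ ξ : K, ‖ξ‖ ^ 2 =
      sInf {r : ℝ | ∃ (ξ₁ : H₁) (ξ₂ : H₂), JK ξ = J₁ ξ₁ + J₂ ξ₂ ∧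
        r = ‖ξ₁‖ ^ 2 + ‖ξ₂‖ ^ 2}) :
    ∀ x : Estar, JK (JstarK x) = J₁ (Jstar₁ x) + J₂ (Jstar₂ x) := by
  intro x
  set a := Jstar₁ x with ha
  set b := Jstar₂ x with hb
  set κ := JstarK x with hκ
  -- there is ξ₀ ∈ K with JK ξ₀ = J₁ a + J₂ b
  have hmem : J₁ a + J₂ b ∈ Set.range JK := by
    rw [hrange]; exact ⟨a, b, rfl⟩
  obtain ⟨ξ₀, hξ₀⟩ := hmem
  -- Key fact: for any decomposition JK ξ = J₁ ξ₁ + J₂ ξ₂ we have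
  -- ⟪κ, ξ⟫ = ⟪a, ξ₁⟫ + ⟪b, ξ₂⟫.
  have key : ∀ (ξ : K) (ξ₁ : H₁) (ξ₂ : H₂), JK ξ = J₁ ξ₁ + J₂ ξ₂ →
      (inner ℂ κ ξ : ℂ) = (inner ℂ a ξ₁ : ℂ) + (inner ℂ b ξ₂ : ℂ) := by
    intro ξ ξ₁ ξ₂ hdec
    obtain ⟨ξ', hξ'⟩ : J₁ ξ₁ ∈ Set.range JK := by
      rw [hrange]; exact ⟨ξ₁, 0, by simp⟩
    obtain ⟨ξ'', hξ''⟩ : J₂ ξ₂ ∈ Set.range JK := by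
      rw [hrange]; exact ⟨0, ξ₂, by simp⟩
    have hsum : ξ = ξ' + ξ'' := by
      apply hJK
      rw [map_add, hξ', hξ'', hdec]
    have h1 : (inner ℂ κ ξ' : ℂ) = (inner ℂ a ξ₁ : ℂ) := by
      rw [hκ, hJstarK x ξ', hξ', ha, hJstar₁ x ξ₁]
    have h2 : (inner ℂ κ ξ'' : ℂ) = (inner ℂ b ξ₂ : ℂ) := by
      rw [hκ, hJstarK x ξ'', hξ'', hb, hJstar₂ x ξ₂]
    rw [hsum, inner_add_right, h1, h2]
  set C : ℝ := ‖a‖ ^ 2 + ‖b‖ ^ 2 with hC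
  have hC0 : 0 ≤ C := by positivity
  -- ⟪κ, ξ₀⟫ = C
  have hinner : (inner ℂ κ ξ₀ : ℂ) = (C : ℝ) := by
    rw [key ξ₀ a b hξ₀, inner_self_eq_norm_sq_to_K, inner_self_eq_norm_sq_to_K]
    push_cast [hC]
    norm_num
  -- ‖ξ₀‖² ≤ C
  have hξ₀le : ‖ξ₀‖ ^ 2 ≤ C := by
    rw [hnorm ξ₀]
    apply csInf_le
    · refine ⟨0, ?_⟩
      rintro r ⟨ξ₁, ξ₂, -, rfl⟩
      positivity
    · exact ⟨a, b, hξ₀, rfl⟩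
  -- ‖κ‖² ≤ C
  have hκle : ‖κ‖ ^ 2 ≤ C := by
    -- for every admissible r, (‖κ‖²)² ≤ C * r
    have hbound : ∀ r ∈ {r : ℝ | ∃ (ξ₁ : H₁) (ξ₂ : H₂), JK κ = J₁ ξ₁ + J₂ ξ₂ ∧
        r = ‖ξ₁‖ ^ 2 + ‖ξ₂‖ ^ 2}, (‖κ‖ ^ 2) ^ 2 ≤ C * r := by
      rintro r ⟨ξ₁, ξ₂, hdec, rfl⟩
      have h1 : ‖κ‖ ^ 2 = RCLike.re (inner ℂ κ κ : ℂ) := by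
        exact (inner_self_eq_norm_sq (𝕜 := ℂ) κ).symm
      have h2 : ‖κ‖ ^ 2 ≤ ‖a‖ * ‖ξ₁‖ + ‖b‖ * ‖ξ₂‖ := by
        rw [h1, key κ ξ₁ ξ₂ hdec, map_add]
        have ha1 : RCLike.re (inner ℂ a ξ₁ : ℂ) ≤ ‖a‖ * ‖ξ₁‖ := re_inner_le_norm a ξ₁
        have hb1 : RCLike.re (inner ℂ b ξ₂ : ℂ) ≤ ‖b‖ * ‖ξ₂‖ := re_inner_le_norm b ξ₂
        linarith
      have h3 : 0 ≤ ‖κ‖ ^ 2 := by positivity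
      nlinarith [norm_nonneg a, norm_nonneg b, norm_nonneg ξ₁, norm_nonneg ξ₂,
        sq_nonneg (‖a‖ * ‖ξ₂‖ - ‖b‖ * ‖ξ₁‖)]
    have hne : ∃ r, r ∈ {r : ℝ | ∃ (ξ₁ : H₁) (ξ₂ : H₂), JK κ = J₁ ξ₁ + J₂ ξ₂ ∧
        r = ‖ξ₁‖ ^ 2 + ‖ξ₂‖ ^ 2} := by
      have : JK κ ∈ Set.range JK := ⟨κ, rfl⟩
      rw [hrange] at this
      obtain ⟨ξ₁, ξ₂, hd⟩ := this
      exact ⟨‖ξ₁‖ ^ 2 + ‖ξ₂‖ ^ 2, ξ₁, ξ₂, hd, rfl⟩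
    rcases eq_or_lt_of_le hC0 with hCz | hCpos
    · -- C = 0 : then any r gives ‖κ‖⁴ ≤ 0
      obtain ⟨r, hr⟩ := hne
      have := hbound r hr
      rw [← hCz] at this
      nlinarith [sq_nonneg (‖κ‖ ^ 2)]
    · -- C > 0
      have hinf : (‖κ‖ ^ 2) ^ 2 / C ≤
          sInf {r : ℝ | ∃ (ξ₁ : H₁) (ξ₂ : H₂), JK κ = J₁ ξ₁ + J₂ ξ₂ ∧
            r = ‖ξ₁‖ ^ 2 + ‖ξ₂‖ ^ 2} := by
        apply le_csInf hne
        intro r hr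
        rw [div_le_iff₀ hCpos]
        have := hbound r hr
        linarith
      rw [← hnorm κ, div_le_iff₀ hCpos] at hinf
      nlinarith [sq_nonneg ‖κ‖, norm_nonneg κ]
  -- conclude κ = ξ₀
  have hdist : ‖κ - ξ₀‖ ^ 2 ≤ 0 := by
    have hns : ‖κ - ξ₀‖ ^ 2 = ‖κ‖ ^ 2 - 2 * RCLike.re (inner ℂ κ ξ₀ : ℂ) + ‖ξ₀‖ ^ 2 :=
      norm_sub_sq κ ξ₀
    have hre : RCLike.re (inner ℂ κ ξ₀ : ℂ) = C := by rw [hinner]; simp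
    rw [hns, hre]
    linarith
  have hz : κ = ξ₀ := by
    have h0 : ‖κ - ξ₀‖ = 0 := by
      nlinarith [norm_nonneg (κ - ξ₀)]
    rw [← sub_eq_zero]
    exact norm_eq_zero.mp h0
  rw [hz]
  exact hξ₀
end

section
/- Let H₁, H₂ be Hilbert subspaces of E. Define an inner product on the intersection H₁ ∩ H₂ by (ξ, χ) = (ξ, χ)_{H₁} + (ξ, χ)_{H₂}. Then this form is a positive definite inner product, and if H₁ ∩ H₂ is complete under the induced norm (which holds since both H₁ and H₂ are Hilbert spaces continuously included in E), H₁ ∩ H₂ with this inner product is a Hilbert subspace of E satisfying H₁ ∩ H₂ ≤ H₁ and H₁ ∩ H₂ ≤ H₂. -/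
open scoped ComplexOrder

/-- Let `H₁, H₂` be Hilbert subspaces of `E`. The form
`(ξ, χ) = (ξ, χ)_{H₁} + (ξ, χ)_{H₂}` on the intersection `H₁ ∩ H₂` is a positive
definite inner product, and the intersection, equipped with this inner product
(encoded by a complete inner product space `K` included in `E` via `JK`, whose range
is `range J₁ ∩ range J₂` and whose inner product is the sum of the two inner
products), is a Hilbert subspace of `E` with `H₁ ∩ H₂ ≤ H₁` and `H₁ ∩ H₂ ≤ H₂`. -/
theorem intersection_hilbert_subspace
    {E : Type*} [AddCommGroup E] [Module ℂ E] [TopologicalSpace E]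
    {H₁ : Type*} [NormedAddCommGroup H₁] [InnerProductSpace ℂ H₁] [CompleteSpace H₁]
    {H₂ : Type*} [NormedAddCommGroup H₂] [InnerProductSpace ℂ H₂] [CompleteSpace H₂]
    {K : Type*} [NormedAddCommGroup K] [InnerProductSpace ℂ K] [CompleteSpace K]
    (J₁ : H₁ →L[ℂ] E) (hJ₁ : Function.Injective J₁)
    (J₂ : H₂ →L[ℂ] E) (hJ₂ : Function.Injective J₂)
    (JK : K →ₗ[ℂ] E) (hJK : Function.Injective JK)
    (hrange : Set.range JK = Set.range J₁ ∩ Set.range J₂)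
    (hip : ∀ (ξ χ : K) (ξ₁ χ₁ : H₁) (ξ₂ χ₂ : H₂),
      JK ξ = J₁ ξ₁ → JK ξ = J₂ ξ₂ → JK χ = J₁ χ₁ → JK χ = J₂ χ₂ →
      (inner ℂ ξ χ : ℂ) = inner ℂ ξ₁ χ₁ + inner ℂ ξ₂ χ₂) :
    -- the sum form is a positive definite inner product on the intersection
    (∀ (ξ₁ : H₁) (ξ₂ : H₂), J₁ ξ₁ = J₂ ξ₂ →
      0 ≤ (inner ℂ ξ₁ ξ₁ : ℂ) + inner ℂ ξ₂ ξ₂ ∧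
        ((inner ℂ ξ₁ ξ₁ : ℂ) + inner ℂ ξ₂ ξ₂ = 0 → ξ₁ = 0 ∧ ξ₂ = 0)) ∧
    -- the intersection is a Hilbert subspace of E: its inclusion is continuous
    Continuous JK ∧
    -- H₁ ∩ H₂ ≤ H₁ : the inclusion into H₁ has operator norm at most 1
    (∀ (ξ : K) (ξ₁ : H₁), JK ξ = J₁ ξ₁ → ‖ξ₁‖ ≤ ‖ξ‖) ∧
    -- H₁ ∩ H₂ ≤ H₂ : the inclusion into H₂ has operator norm at most 1
    (∀ (ξ : K) (ξ₂ : H₂), JK ξ = J₂ ξ₂ → ‖ξ₂‖ ≤ ‖ξ‖) := by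
  have exists₁ : ∀ ξ : K, ∃ ξ₁, JK ξ = J₁ ξ₁ := fun ξ => by
    have h : JK ξ ∈ Set.range J₁ ∩ Set.range J₂ := hrange ▸ Set.mem_range_self ξ
    obtain ⟨ξ₁, h1⟩ := h.1; exact ⟨ξ₁, h1.symm⟩
  have exists₂ : ∀ ξ : K, ∃ ξ₂, JK ξ = J₂ ξ₂ := fun ξ => by
    have h : JK ξ ∈ Set.range J₁ ∩ Set.range J₂ := hrange ▸ Set.mem_range_self ξ
    obtain ⟨ξ₂, h2⟩ := h.2; exact ⟨ξ₂, h2.symm⟩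
  have key : ∀ (ξ : K) (ξ₁ : H₁) (ξ₂ : H₂), JK ξ = J₁ ξ₁ → JK ξ = J₂ ξ₂ →
      ‖ξ‖^2 = ‖ξ₁‖^2 + ‖ξ₂‖^2 := by
    intro ξ ξ₁ ξ₂ h1 h2
    have e := hip ξ ξ ξ₁ ξ₁ ξ₂ ξ₂ h1 h2 h1 h2
    rw [inner_self_eq_norm_sq_to_K, inner_self_eq_norm_sq_to_K,
      inner_self_eq_norm_sq_to_K] at e
    exact_mod_cast e
  have norm₁ : ∀ (ξ : K) (ξ₁ : H₁), JK ξ = J₁ ξ₁ → ‖ξ₁‖ ≤ ‖ξ‖ := by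
    intro ξ ξ₁ h1
    obtain ⟨ξ₂, h2⟩ := exists₂ ξ
    have := key ξ ξ₁ ξ₂ h1 h2
    nlinarith [norm_nonneg ξ, norm_nonneg ξ₁, sq_nonneg ‖ξ₂‖]
  have norm₂ : ∀ (ξ : K) (ξ₂ : H₂), JK ξ = J₂ ξ₂ → ‖ξ₂‖ ≤ ‖ξ‖ := by
    intro ξ ξ₂ h2
    obtain ⟨ξ₁, h1⟩ := exists₁ ξ
    have := key ξ ξ₁ ξ₂ h1 h2
    nlinarith [norm_nonneg ξ, norm_nonneg ξ₂, sq_nonneg ‖ξ₁‖]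
  refine ⟨?_, ?_, norm₁, norm₂⟩
  · intro ξ₁ ξ₂ h
    have hmem : J₁ ξ₁ ∈ Set.range JK := by
      rw [hrange]; exact ⟨Set.mem_range_self ξ₁, ⟨ξ₂, h.symm⟩⟩
    obtain ⟨ξ, hξ⟩ := hmem
    have e := hip ξ ξ ξ₁ ξ₁ ξ₂ ξ₂ hξ (hξ.trans h) hξ (hξ.trans h)
    rw [inner_self_eq_norm_sq_to_K (𝕜 := ℂ) (x := ξ₁),
      inner_self_eq_norm_sq_to_K (𝕜 := ℂ) (x := ξ₂)]
    constructor
    · have h0 : (0:ℝ) ≤ ‖ξ₁‖^2 + ‖ξ₂‖^2 := by positivity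
      have h0' : (0:ℂ) ≤ ((‖ξ₁‖^2 + ‖ξ₂‖^2 : ℝ) : ℂ) := by
        rw [Complex.zero_le_real]; exact h0
      push_cast at h0'; exact h0'
    · intro hz
      have hz' : ((‖ξ₁‖^2 + ‖ξ₂‖^2 : ℝ) : ℂ) = 0 := by push_cast; exact hz
      have hr : ‖ξ₁‖^2 + ‖ξ₂‖^2 = 0 := Complex.ofReal_eq_zero.mp hz'
      have h1 : ‖ξ₁‖ = 0 := by nlinarith [sq_nonneg ‖ξ₁‖, sq_nonneg ‖ξ₂‖]
      have h2 : ‖ξ₂‖ = 0 := by nlinarith [sq_nonneg ‖ξ₁‖, sq_nonneg ‖ξ₂‖]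
      exact ⟨norm_eq_zero.mp h1, norm_eq_zero.mp h2⟩
  · -- continuity of JK
    set T : K → H₁ := fun ξ => (exists₁ ξ).choose with hT
    have hTspec : ∀ ξ : K, JK ξ = J₁ (T ξ) := fun ξ => (exists₁ ξ).choose_spec
    have hadd : ∀ ξ χ : K, T ξ - T χ = T (ξ - χ) := by
      intro ξ χ
      apply hJ₁
      rw [map_sub, ← hTspec ξ, ← hTspec χ, ← hTspec (ξ - χ), map_sub]
    have hlip : LipschitzWith 1 T := by
      apply LipschitzWith.of_dist_le_mul
      intro ξ χ
      rw [dist_eq_norm, dist_eq_norm, hadd]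
      simpa using norm₁ (ξ - χ) (T (ξ - χ)) (hTspec _)
    have : (JK : K → E) = fun ξ => J₁ (T ξ) := funext hTspec
    rw [this]
    exact J₁.continuous.comp hlip.continuous
end
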